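/- For all integers n ≥ 2 and 1 ≤ j ≤ n, the signed Stirling numbers of the first kind satisfy |η_{j,n}| ≤ ((n-1)!/(j-1)!)² / (n-j)!. -/

import Mathlib

/-- Falling factorial. -/
noncomputable def ff (z : ℂ) : ℕ → ℂ
  | 0 => 1
  | n + 1 => ff z n * (z - n)

/-- Signed Stirling numbers of the first kind (integer valued), `sv n j = η j n`. -/
def sv : ℕ → ℕ → ℤ
  | 0, j => if j = 0 then 1 else 0
  | n+1, j => (if j = 0 then 0 else sv n (j-1)) - n * sv n j

/-- Unsigned Stirling numbers of the first kind. -/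
def cc : ℕ → ℕ → ℕ
  | 0, j => if j = 0 then 1 else 0
  | n+1, j => (if j = 0 then 0 else cc n (j-1)) + n * cc n j

lemma sv_eq_zero : ∀ n j, n < j → sv n j = 0 := by
  intro n
  induction n with
  | zero =>
    intro j hj
    have hj0 : j ≠ 0 := by omega
    simp [sv, hj0]
  | succ n ih =>
    intro j hj
    have hj0 : j ≠ 0 := by omega
    have h1 : sv n (j-1) = 0 := ih _ (by omega)
    have h2 : sv n j = 0 := ih _ (by omega)
    simp [sv, hj0, h1, h2]

lemma cc_zero : ∀ n, 1 ≤ n → cc n 0 = 0 := by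
  intro n
  induction n with
  | zero => omega
  | succ n ih =>
    intro _
    rcases Nat.eq_zero_or_pos n with h | h
    · subst h; simp [cc]
    · simp [cc, ih h]


lemma cc_eq_zero_of_lt : ∀ p q, p < q → cc p q = 0 := by
  intro p
  induction p with
  | zero =>
    intro q hq
    have hq0 : q ≠ 0 := by omega
    simp [cc, hq0]
  | succ p ihp =>
    intro q hq
    have hq0 : q ≠ 0 := by omega
    have h1 : cc p (q-1) = 0 := ihp _ (by omega)
    have h2 : cc p q = 0 := ihp _ (by omega)
    simp [cc, hq0, h1, h2]

lemma cc_self : ∀ m, cc m m = 1 := by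
  intro m
  induction m with
  | zero => simp [cc]
  | succ m ihm =>
    simp [cc, cc_eq_zero_of_lt m (m+1) (by omega), ihm]

lemma abs_sv_le_cc : ∀ n j, |sv n j| ≤ (cc n j : ℤ) := by
  intro n
  induction n with
  | zero => intro j; by_cases h : j = 0 <;> simp [sv, cc, h]
  | succ n ih =>
    intro j
    by_cases h : j = 0
    · subst h
      simp only [sv, cc, if_pos rfl]
      calc |(0 : ℤ) - n * sv n 0| = (n : ℤ) * |sv n 0| := by
            rw [zero_sub, abs_neg, abs_mul, Nat.abs_cast]
        _ ≤ (n : ℤ) * (cc n 0) := by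
            exact mul_le_mul_of_nonneg_left (ih 0) (by positivity)
        _ = ((0 + n * cc n 0 : ℕ) : ℤ) := by push_cast; ring
    · simp only [sv, cc, if_neg h]
      calc |sv n (j-1) - (n : ℤ) * sv n j|
          ≤ |sv n (j-1)| + |(n : ℤ) * sv n j| := abs_sub _ _
        _ ≤ (cc n (j-1) : ℤ) + (n : ℤ) * (cc n j) := by
            rw [abs_mul, Nat.abs_cast]
            exact add_le_add (ih _) (mul_le_mul_of_nonneg_left (ih _) (by positivity))
        _ = ((cc n (j-1) + n * cc n j : ℕ) : ℤ) := by push_cast; ring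

lemma cc_bound : ∀ n, 1 ≤ n → ∀ k, k ≤ n - 1 →
    cc n (k+1) ≤ Nat.choose (n-1) k * Nat.descFactorial (n-1) (n-1-k) := by
  intro n
  induction n with
  | zero => omega
  | succ n ih =>
    intro _ k hk
    rcases Nat.eq_zero_or_pos n with hn0 | hn1
    · subst hn0
      interval_cases k
      simp [cc]
    · -- n ≥ 1; cc (n+1) (k+1) = cc n k + n * cc n (k+1)
      have hrec : cc (n+1) (k+1) = cc n k + n * cc n (k+1) := by
        simp [cc]
      have hk' : k ≤ n := by omega
      rcases Nat.eq_zero_or_pos k with hk0 | hkpos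
      · -- k = 0
        subst hk0
        have h0 : cc n 0 = 0 := cc_zero n hn1
        rw [hrec, h0]
        have h1 : cc n 1 ≤ Nat.choose (n-1) 0 * Nat.descFactorial (n-1) (n-1-0) :=
          ih hn1 0 (by omega)
        simp only [Nat.choose_zero_right, one_mul, Nat.sub_zero] at h1 ⊢
        obtain ⟨m, rfl⟩ : ∃ m, n = m + 1 := ⟨n - 1, by omega⟩
        simp only [Nat.add_sub_cancel] at h1 ⊢
        calc 0 + (m+1) * cc (m+1) 1 ≤ (m+1) * Nat.descFactorial m m := by
              simpa using Nat.mul_le_mul_left (m+1) h1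
          _ = Nat.descFactorial (m+1) (m+1) := (Nat.succ_descFactorial_succ m m).symm
      · -- k ≥ 1
        obtain ⟨k', rfl⟩ := Nat.exists_eq_add_of_le hkpos
        rw [Nat.add_comm 1 k'] at *
        rcases Nat.lt_or_ge k' (n-1) with hlt | hge
        · -- k'+1 ≤ n-1
          have h1 : cc n (k'+1) ≤ Nat.choose (n-1) k' * Nat.descFactorial (n-1) (n-1-k') :=
            ih hn1 k' (by omega)
          have h2 : cc n (k'+1+1) ≤
              Nat.choose (n-1) (k'+1) * Nat.descFactorial (n-1) (n-1-(k'+1)) :=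
            ih hn1 (k'+1) (by omega)
          rw [hrec]
          -- target: ≤ choose n (k'+1) * descFactorial n (n - (k'+1))
          have hgoal : Nat.succ n - 1 = n := by simp
          rw [hgoal]
          -- let a = n-1
          obtain ⟨a, ha⟩ : ∃ a, n = a + 1 := ⟨n - 1, by omega⟩
          subst ha
          simp only [Nat.add_sub_cancel] at h1 h2 hlt ⊢
          -- a - k' ≥ 1
          obtain ⟨m, hm⟩ : ∃ m, a - k' = m + 1 := ⟨a - k' - 1, by omega⟩
          have hm2 : a - (k'+1) = m := by omega
          have hm3 : (a+1) - (k'+1) = m + 1 := by omega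
          rw [hm] at h1
          rw [hm2] at h2
          rw [hm3]
          rw [Nat.choose_succ_succ' (a) (k')] -- choose (a+1) (k'+1) = choose a k' + choose a (k'+1)?
          rw [Nat.succ_descFactorial_succ]
          -- RHS = (choose a k' + choose a (k'+1)) * ((a+1) * descFactorial a m)
          have key1 : Nat.descFactorial a (m+1) ≤ (a+1) * Nat.descFactorial a m := by
            rw [Nat.descFactorial_succ]
            exact Nat.mul_le_mul_right _ (by omega)
          calc cc (a+1) (k'+1) + (a+1) * cc (a+1) (k'+1+1)
              ≤ Nat.choose a k' * Nat.descFactorial a (m+1)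
                + (a+1) * (Nat.choose a (k'+1) * Nat.descFactorial a m) :=
                Nat.add_le_add h1 (Nat.mul_le_mul_left _ h2)
            _ ≤ Nat.choose a k' * ((a+1) * Nat.descFactorial a m)
                + Nat.choose a (k'+1) * ((a+1) * Nat.descFactorial a m) := by
                exact Nat.add_le_add (Nat.mul_le_mul_left _ key1) (by ring_nf; omega)
            _ = (Nat.choose a k' + Nat.choose a (k'+1)) * ((a+1) * Nat.descFactorial a m) := by
                ring
        · -- k'+1 = n-1+1 = n? since k'+1 ≤ n and k' ≥ n-1, so k'+1 = n
          have hkn : k' + 1 = n := by omega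
          subst hkn
          rw [hrec, cc_self, cc_eq_zero_of_lt _ _ (by omega)]
          simp

/-- The expansion of the falling factorial with coefficients `sv`. -/
lemma ff_expand : ∀ n (z : ℂ), ff z n = ∑ j ∈ Finset.range (n + 1), (sv n j : ℂ) * z ^ j := by
  intro n
  induction n with
  | zero => intro z; simp [ff, sv]
  | succ n ih =>
    intro z
    have hstep : ff z (n+1) = ff z n * (z - n) := rfl
    rw [hstep, ih]
    have hsplit : ∑ j ∈ Finset.range (n + 2), (sv (n+1) j : ℂ) * z ^ j
        = ∑ j ∈ Finset.range (n + 2),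
            (((if j = 0 then 0 else sv n (j-1)) : ℤ) : ℂ) * z ^ j
          - ∑ j ∈ Finset.range (n + 2), ((n : ℂ) * (sv n j : ℂ)) * z ^ j := by
      rw [← Finset.sum_sub_distrib]
      apply Finset.sum_congr rfl
      intro j _
      show ((sv (n+1) j : ℤ) : ℂ) * z ^ j = _
      rw [show sv (n+1) j = (if j = 0 then 0 else sv n (j-1)) - n * sv n j from rfl]
      push_cast
      ring
    rw [hsplit]
    have h1 : ∑ j ∈ Finset.range (n + 2),
        (((if j = 0 then 0 else sv n (j-1)) : ℤ) : ℂ) * z ^ j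
        = ∑ i ∈ Finset.range (n + 1), (sv n i : ℂ) * z ^ (i+1) := by
      rw [Finset.sum_range_succ']
      simp
    have h2 : ∑ j ∈ Finset.range (n + 2), ((n : ℂ) * (sv n j : ℂ)) * z ^ j
        = (n : ℂ) * ∑ j ∈ Finset.range (n + 1), (sv n j : ℂ) * z ^ j := by
      rw [Finset.sum_range_succ, sv_eq_zero n (n+1) (by omega)]
      rw [Finset.mul_sum]
      simp [mul_assoc]
    rw [h1, h2, Finset.sum_mul, Finset.mul_sum, ← Finset.sum_sub_distrib]
    apply Finset.sum_congr rfl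
    intro i _
    ring

/-- Uniqueness of coefficients. -/
lemma coeff_unique {n : ℕ} {a b : ℕ → ℂ}
    (h : ∀ z : ℂ, ∑ j ∈ Finset.range (n+1), a j * z ^ j
      = ∑ j ∈ Finset.range (n+1), b j * z ^ j) :
    ∀ j, j ≤ n → a j = b j := by
  intro j hj
  set P : Polynomial ℂ := ∑ i ∈ Finset.range (n+1), Polynomial.C (a i) * Polynomial.X ^ i
  set Q : Polynomial ℂ := ∑ i ∈ Finset.range (n+1), Polynomial.C (b i) * Polynomial.X ^ i
  have hPQ : P = Q := by
    apply Polynomial.funext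
    intro z
    simp only [P, Q, Polynomial.eval_finset_sum, Polynomial.eval_mul, Polynomial.eval_C,
      Polynomial.eval_pow, Polynomial.eval_X]
    exact h z
  have hcoeff : ∀ (c : ℕ → ℂ),
      (∑ i ∈ Finset.range (n+1), Polynomial.C (c i) * Polynomial.X ^ i).coeff j = c j := by
    intro c
    rw [Polynomial.finset_sum_coeff]
    rw [Finset.sum_eq_single j]
    · simp
    · intro i _ hij
      simp [Polynomial.coeff_C_mul, Polynomial.coeff_X_pow, Ne.symm hij]
    · intro hmem
      exact absurd (Finset.mem_range.mpr (by omega)) hmem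
  have := congrArg (fun p => Polynomial.coeff p j) hPQ
  simpa [P, Q, hcoeff] using this

theorem stmt_5 (η : ℕ → ℕ → ℝ)
    (hexp : ∀ n : ℕ, ∀ z : ℂ, ff z n = ∑ j ∈ Finset.range (n + 1), (η j n : ℂ) * z ^ j)
    (n j : ℕ) (hn : 2 ≤ n) (hj1 : 1 ≤ j) (hjn : j ≤ n) :
    |η j n| ≤ (((n - 1).factorial : ℝ) / ((j - 1).factorial : ℝ)) ^ 2
      / ((n - j).factorial : ℝ) := by
  -- η j n = sv n j
  have heq : (η j n : ℂ) = ((sv n j : ℤ) : ℂ) := by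
    apply coeff_unique (n := n) (a := fun i => (η i n : ℂ)) (b := fun i => ((sv n i : ℤ) : ℂ))
      _ j hjn
    intro z
    rw [← hexp n z, ff_expand n z]
  have heta : η j n = (sv n j : ℝ) := by
    have : ((η j n : ℝ) : ℂ) = (((sv n j : ℝ)) : ℂ) := by push_cast at heq ⊢; exact heq
    exact_mod_cast this
  rw [heta]
  -- |sv n j| ≤ cc n j
  have habs : |(sv n j : ℝ)| ≤ (cc n j : ℝ) := by
    have h := abs_sv_le_cc n j
    have h2 : ((|sv n j| : ℤ) : ℝ) ≤ ((cc n j : ℤ) : ℝ) := by exact_mod_cast h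
    rw [Int.cast_abs] at h2
    simpa using h2
  refine habs.trans ?_
  -- cc n j ≤ choose (n-1) (j-1) * descFactorial (n-1) (n-j)
  obtain ⟨k, rfl⟩ : ∃ k, j = k + 1 := ⟨j - 1, by omega⟩
  have hcc : cc n (k+1) ≤ Nat.choose (n-1) k * Nat.descFactorial (n-1) (n-1-k) :=
    cc_bound n (by omega) k (by omega)
  have hsub : n - (k+1) = n - 1 - k := by omega
  have hkn1 : k ≤ n - 1 := by omega
  -- RHS equals the cast of the nat bound
  have hfact1 : (Nat.choose (n-1) k) * k.factorial * (n-1-k).factorial = (n-1).factorial :=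
    Nat.choose_mul_factorial_mul_factorial hkn1
  have hfact2 : (n-1-k).factorial * Nat.descFactorial (n-1) k = (n-1).factorial := by
    have := Nat.factorial_mul_descFactorial hkn1
    rwa [show n - 1 - k = n - 1 - k from rfl] at this
  have hfact3 : k.factorial * Nat.descFactorial (n-1) (n-1-k) = (n-1).factorial := by
    have h := Nat.factorial_mul_descFactorial (n := n-1) (k := n-1-k) (by omega)
    rwa [show n - 1 - (n - 1 - k) = k by omega] at h
  have hrhs : (((n - 1).factorial : ℝ) / ((k+1 - 1).factorial : ℝ)) ^ 2
      / ((n - (k+1)).factorial : ℝ)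
      = ((Nat.choose (n-1) k * Nat.descFactorial (n-1) (n-1-k) : ℕ) : ℝ) := by
    rw [show k + 1 - 1 = k from rfl, hsub]
    have hk0 : (k.factorial : ℝ) ≠ 0 := by positivity
    have hnk0 : ((n-1-k).factorial : ℝ) ≠ 0 := by positivity
    field_simp
    have hd : (((n-1).choose k : ℕ) : ℝ) * ((n-1-k).factorial : ℝ)
        = ((n-1).descFactorial (n-1-k) : ℝ) := by
      have hnat : (n-1).choose k * (n-1-k).factorial * k.factorial
          = (n-1).descFactorial (n-1-k) * k.factorial := by
        calc (n-1).choose k * (n-1-k).factorial * k.factorial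
            = (n-1).choose k * k.factorial * (n-1-k).factorial := by ring
          _ = (n-1).factorial := hfact1
          _ = k.factorial * (n-1).descFactorial (n-1-k) := hfact3.symm
          _ = (n-1).descFactorial (n-1-k) * k.factorial := by ring
      have hnat2 : (n-1).choose k * (n-1-k).factorial = (n-1).descFactorial (n-1-k) :=
        Nat.eq_of_mul_eq_mul_right (Nat.factorial_pos k) hnat
      exact_mod_cast congrArg (fun x : ℕ => (x : ℝ)) hnat2
    have hf1R : (((n-1).choose k : ℕ) : ℝ) * (k.factorial : ℝ) * ((n-1-k).factorial : ℝ)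
        = ((n-1).factorial : ℝ) := by exact_mod_cast hfact1
    rw [Nat.cast_mul, ← hd, ← hf1R]
    ring
  rw [hrhs]
  exact_mod_cast hcc
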